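/- Let G be a group such that the inner automorphism group Inn(G) has finite index in the group Conj(G) of conjugating automorphisms of G, and such that the quotient group Aut(G)/Conj(G) is residually finite. Then every virtually torsion-free subgroup of the outer automorphism group Out(G) = Aut(G)/Inn(G) is residually finite. -/

import Mathlib

/-- The subgroup of `Aut(G) = MulAut G` consisting of the conjugating
automorphisms, i.e. those `f` with `f g` conjugate to `g` for every `g ∈ G`. -/
def ConjAut (G : Type*) [Group G] : Subgroup (MulAut G) where
  carrier := {f : MulAut G | ∀ g : G, IsConj g (f g)}
  one_mem' := fun g => by simpa using IsConj.refl g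
  mul_mem' := by
    intro a b ha hb g
    simpa using (hb g).trans (ha (b g))
  inv_mem' := by
    intro a ha g
    have h := (ha (a⁻¹ g)).symm
    simpa using h

/-- `G` is residually finite: every nontrivial element is detected by a
homomorphism to a finite group. -/
def ResiduallyFinite (G : Type*) [Group G] : Prop :=
  ∀ g : G, g ≠ 1 → ∃ (F : Type) (_ : Group F) (_ : Finite F) (φ : G →* F), φ g ≠ 1

/-- `G` is virtually torsion-free: it has a torsion-free subgroup of finite
index. -/
def VirtuallyTorsionFree (G : Type*) [Group G] : Prop :=
  ∃ K : Subgroup G, K.FiniteIndex ∧ (∀ g : K, g ≠ 1 → ¬IsOfFinOrder g)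

/-- Conjugation of permutations by an equivalence, as a monoid hom. -/
def permCongrHom' {α β : Type*} (e : α ≃ β) : Equiv.Perm α →* Equiv.Perm β :=
  MonoidHom.mk' e.permCongr (by
    intro p q
    ext x
    simp [Equiv.Perm.mul_apply])

theorem permCongrHom'_injective {α β : Type*} (e : α ≃ β) :
    Function.Injective (permCongrHom' e) :=
  e.permCongr.injective

/-- Let `G` be a group such that `Inn(G)` (the range of
`MulAut.conj : G →* MulAut G`) has finite index in the group `Conj(G)` of
conjugating automorphisms, and such that `Aut(G)/Conj(G)` is residually finite.
Then every virtually torsion-free subgroup of `Out(G) = Aut(G)/Inn(G)` is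
residually finite. -/
theorem virtuallyTorsionFree_subgroup_of_out_residuallyFinite
    (G : Type*) [Group G]
    [(MulAut.conj : G →* MulAut G).range.Normal] [(ConjAut G).Normal]
    (hfi : ((MulAut.conj : G →* MulAut G).range.subgroupOf (ConjAut G)).FiniteIndex)
    (hres : ResiduallyFinite (MulAut G ⧸ ConjAut G)) :
    ∀ H : Subgroup (MulAut G ⧸ (MulAut.conj : G →* MulAut G).range),
      VirtuallyTorsionFree H → ResiduallyFinite H := by
  classical
  set I : Subgroup (MulAut G) := (MulAut.conj : G →* MulAut G).range with hI
  set C : Subgroup (MulAut G) := ConjAut G with hC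
  have hIC : I ≤ C := by
    rintro f ⟨g, rfl⟩ x
    exact isConj_iff.2 ⟨g, rfl⟩
  -- the map Out(G) → Aut(G)/Conj(G)
  let π : (MulAut G ⧸ I) →* (MulAut G ⧸ C) :=
    QuotientGroup.map I C (MonoidHom.id _) (fun x hx => hIC hx)
  -- the image of Conj(G) in Out(G) is finite
  let ψ : C →* (MulAut G ⧸ I) := (QuotientGroup.mk' I).comp C.subtype
  have hker : ψ.ker = I.subgroupOf C := by
    ext x
    simp [ψ, QuotientGroup.ker_mk', Subgroup.mem_subgroupOf, MonoidHom.mem_ker,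
      QuotientGroup.eq_one_iff]
  haveI : ψ.ker.FiniteIndex := hker ▸ hfi
  haveI : Finite (C ⧸ ψ.ker) := Subgroup.finite_quotient_of_finiteIndex
  haveI hSfin : Finite ψ.range := Finite.of_equiv _ (QuotientGroup.quotientKerEquivRange ψ).toEquiv
  intro H hvtf h hne
  obtain ⟨K, hKfi, hKtf⟩ := hvtf
  by_cases hK : h ∈ K
  · -- h is detected in Aut(G)/Conj(G), since otherwise it has finite order
    have hπ : π (h : MulAut G ⧸ I) ≠ 1 := by
      intro hπ1
      -- then h lies in the image of Conj(G), a finite subgroup, so has finite order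
      obtain ⟨a, ha⟩ := QuotientGroup.mk'_surjective I (h : MulAut G ⧸ I)
      have haC : a ∈ C := by
        have : π ((QuotientGroup.mk' I) a) = QuotientGroup.mk a := rfl
        rw [ha] at this
        rw [this] at hπ1
        exact (QuotientGroup.eq_one_iff a).1 hπ1
      have hmem : (h : MulAut G ⧸ I) ∈ ψ.range := ⟨⟨a, haC⟩, ha⟩
      -- finite order
      have hfin : orderOf ((⟨(h : MulAut G ⧸ I), hmem⟩ : ψ.range)) ≠ 0 :=
        (orderOf_pos _).ne'
      have h1 : orderOf ((⟨(h : MulAut G ⧸ I), hmem⟩ : ψ.range)) =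
          orderOf (h : MulAut G ⧸ I) :=
        (orderOf_injective ψ.range.subtype ψ.range.subtype_injective _).symm
      have h2 : orderOf ((⟨h, hK⟩ : K)) = orderOf (h : MulAut G ⧸ I) :=
        ((orderOf_injective K.subtype K.subtype_injective ⟨h, hK⟩).symm).trans
          (orderOf_injective H.subtype H.subtype_injective h).symm
      have hk1 : (⟨h, hK⟩ : K) ≠ 1 := by
        intro hk
        exact hne (congrArg Subtype.val hk)
      have := hKtf ⟨h, hK⟩ hk1
      rw [← orderOf_eq_zero_iff] at this
      rw [this] at h2
      rw [← h2] at h1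
      exact hfin h1
    obtain ⟨F, _, _, φ, hφ⟩ := hres _ hπ
    exact ⟨F, ‹_›, ‹_›, φ.comp (π.comp H.subtype), hφ⟩
  · -- use the finite permutation action on H ⧸ K
    haveI := hKfi
    haveI : Finite (H ⧸ K) := Subgroup.finite_quotient_of_finiteIndex
    obtain ⟨n, ⟨e⟩⟩ := Finite.exists_equiv_fin (H ⧸ K)
    refine ⟨Equiv.Perm (Fin n), inferInstance, inferInstance,
      (permCongrHom' e).comp (MulAction.toPermHom H (H ⧸ K)), ?_⟩
    intro hcon
    apply hK
    have : MulAction.toPermHom H (H ⧸ K) h = 1 := by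
      apply permCongrHom'_injective e
      simpa using hcon
    have h1 : (MulAction.toPermHom H (H ⧸ K) h) ((1 : H) : H ⧸ K) = ((1 : H) : H ⧸ K) := by
      rw [this]; rfl
    have h2 : ((h : H) : H ⧸ K) = ((1 : H) : H ⧸ K) := by
      simpa [MulAction.toPermHom] using h1
    have h3 : (h : H)⁻¹ * 1 ∈ K := QuotientGroup.eq.mp h2
    simpa using h3
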